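/- Let A and B be uniform algebras on compact Hausdorff spaces X and Y, and let c ≠ 0. Suppose S : A → B is surjective, satisfies Ran_π(Sf · (Sg + c·1)) = Ran_π(f · (g + c·1)) for all f, g ∈ A, and fixes all constants. Then Ran_π(Sf) = Ran_π(f) for every f ∈ A; in particular S is norm-preserving: ‖Sf‖_∞ = ‖f‖_∞. -/

import Mathlib

/-- The peripheral range of a continuous function on a compact space. -/
def Ranπ {X : Type*} [TopologicalSpace X] [CompactSpace X] (f : C(X, ℂ)) : Set ℂ :=
  {z | z ∈ Set.range f ∧ ‖z‖ = ‖f‖}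

lemma exists_mem_Ranπ {X : Type*} [TopologicalSpace X] [CompactSpace X] [Nonempty X]
    (f : C(X, ℂ)) : ∃ z, z ∈ Ranπ f := by
  obtain ⟨x, -, hx⟩ := isCompact_univ.exists_isMaxOn Set.univ_nonempty
    ((map_continuous f).norm.continuousOn)
  refine ⟨f x, ⟨x, rfl⟩, ?_⟩
  refine le_antisymm (f.norm_coe_le_norm x) ((f.norm_le (norm_nonneg _)).mpr
    fun y => hx (Set.mem_univ y))

lemma norm_zero_of_isEmpty {X : Type*} [TopologicalSpace X] [CompactSpace X] [IsEmpty X]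
    (f : C(X, ℂ)) : ‖f‖ = 0 := by
  have : f = 0 := ContinuousMap.ext fun x => isEmptyElim x
  simp [this]

set_option synthInstance.maxHeartbeats 1000000 in
theorem stmt12 {X Y : Type*} [TopologicalSpace X] [CompactSpace X] [T2Space X]
    [TopologicalSpace Y] [CompactSpace Y] [T2Space Y]
    (A : Subalgebra ℂ C(X, ℂ)) (hA : IsClosed (A : Set C(X, ℂ)))
    (hAsep : ∀ x y : X, x ≠ y → ∃ f ∈ A, f x ≠ f y)
    (B : Subalgebra ℂ C(Y, ℂ)) (hB : IsClosed (B : Set C(Y, ℂ)))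
    (hBsep : ∀ x y : Y, x ≠ y → ∃ f ∈ B, f x ≠ f y)
    (c : ℂ) (hc : c ≠ 0) (S : A → B)
    (hSeq : ∀ f g : A,
      Ranπ ((S f * (S g + c • 1) : B) : C(Y, ℂ)) = Ranπ ((f * (g + c • 1) : A) : C(X, ℂ)))
    (hSsurj : Function.Surjective S)
    (hSconst : ∀ lam : ℂ, S (lam • 1) = lam • 1) :
    ∀ f : A, Ranπ ((S f : B) : C(Y, ℂ)) = Ranπ ((f : C(X, ℂ))) ∧
      ‖((S f : B) : C(Y, ℂ))‖ = ‖(f : C(X, ℂ))‖ := by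
  intro f
  have key : Ranπ ((S f : B) : C(Y, ℂ)) = Ranπ ((f : C(X, ℂ))) := by
    have h := hSeq f ((1 - c) • 1)
    have hg : ((1 - c) • 1 + c • 1 : A) = 1 := by
      rw [← add_smul]; simp
    have hg' : (S ((1 - c) • 1) + c • 1 : B) = 1 := by
      rw [hSconst, ← add_smul]; simp
    rw [hg, hg', mul_one, mul_one] at h
    exact h
  refine ⟨key, ?_⟩
  rcases isEmpty_or_nonempty Y with hY | hY
  · have h1 : ‖((S f : B) : C(Y, ℂ))‖ = 0 := norm_zero_of_isEmpty _
    rcases isEmpty_or_nonempty X with hX | hX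
    · rw [h1, norm_zero_of_isEmpty]
    · obtain ⟨z, hz⟩ := exists_mem_Ranπ ((f : C(X, ℂ)))
      rw [← key] at hz
      obtain ⟨⟨y, -⟩, -⟩ := hz
      exact isEmptyElim y
  · obtain ⟨z, hz⟩ := exists_mem_Ranπ (((S f : B) : C(Y, ℂ)))
    have hz' := hz
    rw [key] at hz'
    rw [← hz.2, hz'.2]
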